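/- arXiv:1503.02910 — 2 statements merged into one kernel-verified Lean document; each statement's English description precedes it below -/
import Mathlib

section
/- Let ρ̃ ≥ 0 and ρ̄ ≥ ρ̃ + 1. There exists η = η(ρ̄) > 0 such that for all γ with 1 < γ < 2 and γ − 1 ≤ η, and all ρ with 0 ≤ ρ ≤ 2ρ̄ satisfying |ρ − ρ̃| ≤ (γ−1)^{1/3}, one has ρ^γ − ρ̃^γ − γ ρ̃^{γ−1}(ρ − ρ̃) ≥ (γ−1)^{3/4} |ρ − ρ̃|^{3}. -/
/-- Key derivative estimate: for `0 < p ≤ 1` and `0 ≤ x ≤ y ≤ M`,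
`y^p - x^p ≥ p M^(p-1) (y - x)`. -/
lemma rpow_sub_rpow_ge {p M x y : ℝ} (hp0 : 0 < p) (hp1 : p ≤ 1) (hM : 0 < M)
    (hx : 0 ≤ x) (hxy : x ≤ y) (hyM : y ≤ M) :
    p * M ^ (p - 1) * (y - x) ≤ y ^ p - x ^ p := by
  rcases eq_or_lt_of_le (hx.trans hxy) with hy | hy
  · have hx0 : x = 0 := le_antisymm (hxy.trans hy.ge) hx
    simp [← hy, hx0]
  · set s : ℝ := x / y with hs
    have hs0 : 0 ≤ s := div_nonneg hx hy.le
    have hs1 : s ≤ 1 := div_le_one_of_le₀ hxy hy.le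
    have hb : s ^ p ≤ 1 + p * (s - 1) := by
      have h := rpow_one_add_le_one_add_mul_self
        (show (-1:ℝ) ≤ s - 1 by linarith) hp0.le hp1
      rwa [show (1:ℝ) + (s - 1) = s by ring] at h
    have h1 : x ^ p = s ^ p * y ^ p := by
      rw [← Real.mul_rpow hs0 hy.le, hs, div_mul_cancel₀ _ hy.ne']
    have h2 : p * (1 - s) ≤ 1 - s ^ p := by linarith
    have h3 : y ^ p * (p * (1 - s)) ≤ y ^ p * (1 - s ^ p) :=
      mul_le_mul_of_nonneg_left h2 (Real.rpow_nonneg hy.le p)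
    have h4 : y ^ p = y ^ (p - 1) * y := by
      rw [← Real.rpow_add_one hy.ne', sub_add_cancel]
    have hyx : y * (1 - s) = y - x := by
      rw [hs]; field_simp
    have h5 : M ^ (p - 1) ≤ y ^ (p - 1) :=
      Real.rpow_le_rpow_of_nonpos hy hyM (by linarith)
    have h6 : p * M ^ (p - 1) * (y - x) ≤ p * y ^ (p - 1) * (y - x) := by
      have := mul_le_mul_of_nonneg_left h5 (mul_nonneg hp0.le (sub_nonneg.mpr hxy))
      nlinarith [this]
    have h7 : p * y ^ (p - 1) * (y - x) = y ^ p * (p * (1 - s)) := by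
      rw [h4, ← hyx]; ring
    have h8 : y ^ p * (1 - s ^ p) = y ^ p - x ^ p := by
      rw [h1]; ring
    linarith [h3, h6, h7 ▸ h6, h8 ▸ h3]

/-- Quadratic lower bound on the Taylor remainder of `x ↦ x^γ` for `1 < γ < 2`
on `[0, M]`. -/
lemma remainder_lower_bound {γ M a b : ℝ} (h1 : 1 < γ) (h2 : γ < 2) (hM : 1 ≤ M)
    (ha0 : 0 ≤ a) (haM : a ≤ M) (hb0 : 0 ≤ b) (hbM : b ≤ M) :
    γ * (γ - 1) / 2 * M ^ (γ - 2) * (b - a) ^ 2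
      ≤ b ^ γ - a ^ γ - γ * a ^ (γ - 1) * (b - a) := by
  have hM0 : (0:ℝ) < M := by linarith
  set C : ℝ := γ * (γ - 1) / 2 * M ^ (γ - 2) with hC
  set φ : ℝ → ℝ := fun x => x ^ γ - γ * a ^ (γ - 1) * x - C * (x - a) ^ 2 with hφ
  have hderiv : ∀ x : ℝ,
      HasDerivAt φ (γ * x ^ (γ - 1) - γ * a ^ (γ - 1) - C * (2 * (x - a))) x := by
    intro x
    have d1 := Real.hasDerivAt_rpow_const (p := γ) (x := x) (Or.inr h1.le)
    have d2 : HasDerivAt (fun x : ℝ => γ * a ^ (γ - 1) * x) (γ * a ^ (γ - 1)) x := by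
      simpa using (hasDerivAt_id x).const_mul (γ * a ^ (γ - 1))
    have d3 : HasDerivAt (fun x : ℝ => C * (x - a) ^ 2) (C * (2 * (x - a))) x := by
      have d : HasDerivAt (fun x : ℝ => (x - a) ^ 2) (2 * (x - a)) x := by
        simpa using ((hasDerivAt_id x).sub_const a).fun_pow 2
      exact d.const_mul C
    simpa [hφ] using (d1.fun_sub d2).fun_sub d3
  have hdiff : ∀ x : ℝ, DifferentiableAt ℝ φ x := fun x => (hderiv x).differentiableAt
  have hkey : ∀ x : ℝ, 0 ≤ x → x ≤ M →
      2 * C * |x - a| ≤ γ * |x ^ (γ - 1) - a ^ (γ - 1)| ∨ True := fun _ _ _ => Or.inr trivial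
  have hγ1 : (0:ℝ) < γ - 1 := by linarith
  -- derivative sign on the right of a
  have hderiv_nonneg : ∀ x, a ≤ x → x ≤ M →
      0 ≤ γ * x ^ (γ - 1) - γ * a ^ (γ - 1) - C * (2 * (x - a)) := by
    intro x hax hxM
    have hk := rpow_sub_rpow_ge (p := γ - 1) (M := M) hγ1 (by linarith) hM0 ha0 hax hxM
    rw [show γ - 1 - 1 = γ - 2 by ring] at hk
    have := mul_le_mul_of_nonneg_left hk (show (0:ℝ) ≤ γ by linarith)
    nlinarith [this]
  have hderiv_nonpos : ∀ x, 0 ≤ x → x ≤ a →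
      γ * x ^ (γ - 1) - γ * a ^ (γ - 1) - C * (2 * (x - a)) ≤ 0 := by
    intro x hx0 hxa
    have hk := rpow_sub_rpow_ge (p := γ - 1) (M := M) hγ1 (by linarith) hM0 hx0 hxa haM
    rw [show γ - 1 - 1 = γ - 2 by ring] at hk
    have := mul_le_mul_of_nonneg_left hk (show (0:ℝ) ≤ γ by linarith)
    nlinarith [this]
  have hmain : φ a ≤ φ b := by
    rcases le_total a b with hab | hab
    · have hmono : MonotoneOn φ (Set.Icc a M) := by
        apply monotoneOn_of_deriv_nonneg (convex_Icc a M)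
        · exact fun x _ => (hdiff x).continuousAt.continuousWithinAt
        · exact fun x _ => (hdiff x).differentiableWithinAt
        · intro x hx
          rw [interior_Icc] at hx
          rw [(hderiv x).deriv]
          exact hderiv_nonneg x hx.1.le (hx.2.le)
      exact hmono ⟨le_refl a, haM⟩ ⟨hab, hbM⟩ hab
    · have hanti : AntitoneOn φ (Set.Icc 0 a) := by
        apply antitoneOn_of_deriv_nonpos (convex_Icc 0 a)
        · exact fun x _ => (hdiff x).continuousAt.continuousWithinAt
        · exact fun x _ => (hdiff x).differentiableWithinAt
        · intro x hx
          rw [interior_Icc] at hx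
          rw [(hderiv x).deriv]
          exact hderiv_nonpos x hx.1.le hx.2.le
      exact hanti ⟨hb0, hab⟩ ⟨ha0, le_refl a⟩ hab
  have : a ^ γ - γ * a ^ (γ - 1) * a - 0
      ≤ b ^ γ - γ * a ^ (γ - 1) * b - C * (b - a) ^ 2 := by
    simpa [hφ] using hmain
  nlinarith [this]

/-- Case 2 of the key pointwise inequality in Lemma 4.1: for `ρ̃ ≥ 0` and
`ρ̄ ≥ ρ̃ + 1` there is `η = η(ρ̄) > 0` such that for all `1 < γ < 2` with `γ − 1 ≤ η` and all
`0 ≤ ρ ≤ 2ρ̄` with `|ρ − ρ̃| ≤ (γ−1)^{1/3}`, one has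
`ρ^γ − ρ̃^γ − γ ρ̃^{γ−1}(ρ − ρ̃) ≥ (γ−1)^{3/4} |ρ − ρ̃|³`. -/
theorem key_pointwise_inequality_case2 (ρt ρb : ℝ) (hρt : 0 ≤ ρt) (hρb : ρt + 1 ≤ ρb) :
    ∃ η > (0:ℝ), ∀ γ : ℝ, 1 < γ → γ < 2 → γ - 1 ≤ η →
      ∀ ρ : ℝ, 0 ≤ ρ → ρ ≤ 2 * ρb → |ρ - ρt| ≤ (γ - 1) ^ ((1:ℝ)/3) →
        (γ - 1) ^ ((3:ℝ)/4) * |ρ - ρt| ^ 3 ≤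
          ρ ^ γ - ρt ^ γ - γ * ρt ^ (γ - 1) * (ρ - ρt) := by
  have hρb1 : (1:ℝ) ≤ ρb := by linarith
  have h4ρb : (0:ℝ) < 4 * ρb := by linarith
  refine ⟨(4 * ρb) ^ (-(12:ℝ)), Real.rpow_pos_of_pos h4ρb _, ?_⟩
  intro γ hγ1 hγ2 hγη ρ hρ0 hρM hclose
  have hγ1' : (0:ℝ) < γ - 1 := by linarith
  have hM1 : (1:ℝ) ≤ 2 * ρb := by linarith
  have hρtM : ρt ≤ 2 * ρb := by linarith
  have hA := remainder_lower_bound (M := 2 * ρb) hγ1 hγ2 hM1 hρt hρtM hρ0 hρM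
  set δ : ℝ := ρ - ρt with hδ
  -- scalar estimate : (γ-1)^(3/4) * |δ| ≤ γ(γ-1)/2 * (2ρb)^(γ-2)
  have hscalar : (γ - 1) ^ ((3:ℝ)/4) * |δ| ≤ γ * (γ - 1) / 2 * (2 * ρb) ^ (γ - 2) := by
    have s1 : (γ - 1) ^ ((3:ℝ)/4) * |δ| ≤ (γ - 1) ^ ((13:ℝ)/12) := by
      have := mul_le_mul_of_nonneg_left hclose (Real.rpow_nonneg hγ1'.le ((3:ℝ)/4))
      rwa [← Real.rpow_add hγ1', show (3:ℝ)/4 + 1/3 = 13/12 by norm_num] at this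
    have s2 : (γ - 1) ^ ((13:ℝ)/12) = (γ - 1) ^ ((1:ℝ)/12) * (γ - 1) := by
      rw [show (13:ℝ)/12 = 1/12 + 1 by norm_num, Real.rpow_add hγ1', Real.rpow_one]
    have s3 : (γ - 1) ^ ((1:ℝ)/12) ≤ (4 * ρb)⁻¹ := by
      have h := Real.rpow_le_rpow hγ1'.le hγη (by norm_num : (0:ℝ) ≤ (1:ℝ)/12)
      rwa [← Real.rpow_mul h4ρb.le, show -(12:ℝ) * (1/12) = -1 by norm_num,
        Real.rpow_neg_one] at h
    have s4 : (γ - 1) * (4 * ρb)⁻¹ ≤ γ * (γ - 1) / 2 * (2 * ρb) ^ (γ - 2) := by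
      have hMe : (2 * ρb) ^ (-1:ℝ) ≤ (2 * ρb) ^ (γ - 2) :=
        Real.rpow_le_rpow_of_exponent_le hM1 (by linarith)
      rw [Real.rpow_neg_one] at hMe
      have hinv : (4 * ρb)⁻¹ = (2 * ρb)⁻¹ / 2 := by
        rw [show (4:ℝ) * ρb = 2 * ρb * 2 by ring, mul_inv]; ring
      have hpos : (0:ℝ) < (2 * ρb)⁻¹ := inv_pos.mpr (by linarith)
      nlinarith [mul_le_mul_of_nonneg_left hMe (by nlinarith : (0:ℝ) ≤ γ * (γ - 1) / 2),
        mul_nonneg (sq_nonneg (γ - 1)) hpos.le]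
    calc (γ - 1) ^ ((3:ℝ)/4) * |δ| ≤ (γ - 1) ^ ((1:ℝ)/12) * (γ - 1) := by rw [← s2]; exact s1
      _ ≤ (4 * ρb)⁻¹ * (γ - 1) := mul_le_mul_of_nonneg_right s3 hγ1'.le
      _ ≤ γ * (γ - 1) / 2 * (2 * ρb) ^ (γ - 2) := by rw [mul_comm]; exact s4
  have habs : |δ| ^ 3 = |δ| * δ ^ 2 := by
    rw [pow_succ, sq_abs, mul_comm]
  have hfin : (γ - 1) ^ ((3:ℝ)/4) * |δ| ^ 3
      ≤ γ * (γ - 1) / 2 * (2 * ρb) ^ (γ - 2) * δ ^ 2 := by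
    rw [habs, ← mul_assoc]
    exact mul_le_mul_of_nonneg_right hscalar (sq_nonneg δ)
  exact hfin.trans hA
end

section
/- (Zlotnik's lemma) Let T > 0 and suppose y, b ∈ W^{1,1}(0,T) satisfy y'(t) = g(y(t)) + b'(t) on [0,T] with y(0) = y⁰, where g is continuous on ℝ with g(x) → −∞ as x → ∞. Assume there are constants N₀ ≥ 0, N₁ ≥ 0 with b(t₂) − b(t₁) ≤ N₀ + N₁(t₂ − t₁) for all 0 ≤ t₁ ≤ t₂ ≤ T, and let ζ̄ be a constant such that g(ζ) ≤ −N₁ for all ζ ≥ ζ̄. Then y(t) ≤ max{y⁰, ζ̄} + N₀ for all t ∈ [0,T]. -/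
/-- Zlotnik's lemma: if `y' = g(y) + b'` on `[0,T]`, `g` is continuous with
`g(x) → −∞` as `x → ∞`, `b(t₂) − b(t₁) ≤ N₀ + N₁(t₂ − t₁)` for `0 ≤ t₁ ≤ t₂ ≤ T`, and
`g(ζ) ≤ −N₁` for all `ζ ≥ ζ̄`, then `y(t) ≤ max{y(0), ζ̄} + N₀` on `[0,T]`. -/
theorem zlotnik_lemma (T : ℝ) (hT : 0 < T) (g : ℝ → ℝ) (hg : Continuous g)
    (hgtop : Filter.Tendsto g Filter.atTop Filter.atBot)
    (y b b' : ℝ → ℝ) (N0 N1 ζb : ℝ) (hN0 : 0 ≤ N0) (hN1 : 0 ≤ N1)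
    (hy : ∀ t ∈ Set.Icc (0:ℝ) T, HasDerivAt y (g (y t) + b' t) t)
    (hb : ∀ t ∈ Set.Icc (0:ℝ) T, HasDerivAt b (b' t) t)
    (hbb : ∀ t1 t2 : ℝ, 0 ≤ t1 → t1 ≤ t2 → t2 ≤ T → b t2 - b t1 ≤ N0 + N1 * (t2 - t1))
    (hζ : ∀ ζ : ℝ, ζb ≤ ζ → g ζ ≤ -N1) :
    ∀ t ∈ Set.Icc (0:ℝ) T, y t ≤ max (y 0) ζb + N0 := by
  set M : ℝ := max (y 0) ζb with hM
  intro t2 ht2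
  by_contra hcon
  push_neg at hcon
  obtain ⟨ht20, ht2T⟩ := ht2
  -- the set of times before t2 where y ≤ M
  set S : Set ℝ := {s | s ∈ Set.Icc (0:ℝ) t2 ∧ y s ≤ M} with hS
  have h0S : (0:ℝ) ∈ S := ⟨⟨le_refl 0, ht20⟩, le_max_left _ _⟩
  have hbdd : BddAbove S := ⟨t2, fun s hs => hs.1.2⟩
  have hne : S.Nonempty := ⟨0, h0S⟩
  set t1 : ℝ := sSup S with ht1
  have h0t1 : 0 ≤ t1 := le_csSup hbdd h0S
  have ht1t2 : t1 ≤ t2 := csSup_le hne fun s hs => hs.1.2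
  have ht1Icc : t1 ∈ Set.Icc (0:ℝ) T := ⟨h0t1, le_trans ht1t2 ht2T⟩
  -- y t1 ≤ M
  have hyt1 : y t1 ≤ M := by
    by_contra hy1
    push_neg at hy1
    have hcl : t1 ∈ closure S := csSup_mem_closure hne hbdd
    have hU : y ⁻¹' Set.Ioi M ∈ nhds t1 :=
      (hy t1 ht1Icc).continuousAt.preimage_mem_nhds (Ioi_mem_nhds hy1)
    rcases (mem_closure_iff_nhds.1 hcl) _ hU with ⟨s, hsU, hsS⟩
    exact absurd hsS.2 (not_le.2 hsU)
  have ht1lt : t1 < t2 := by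
    rcases lt_or_eq_of_le ht1t2 with h | h
    · exact h
    · exfalso; rw [h] at hyt1; linarith
  -- on (t1, t2], y > M
  have hgt : ∀ x ∈ Set.Ioc t1 t2, M < y x := by
    intro x hx
    by_contra hyx
    push_neg at hyx
    have : x ∈ S := ⟨⟨le_trans h0t1 hx.1.le, hx.2⟩, hyx⟩
    exact absurd (le_csSup hbdd this) (not_le.2 hx.1)
  -- auxiliary function h
  set h : ℝ → ℝ := fun s => y s - b s + N1 * s with hh
  have hash : ∀ s ∈ Set.Icc (0:ℝ) T, HasDerivAt h (g (y s) + N1) s := by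
    intro s hs
    have := ((hy s hs).sub (hb s hs)).add ((hasDerivAt_id s).const_mul N1)
    convert this using 1
    · rfl
    · rfl
    · rfl
    ring
  have hsub : Set.Icc t1 t2 ⊆ Set.Icc (0:ℝ) T := fun s hs =>
    ⟨le_trans h0t1 hs.1, le_trans hs.2 ht2T⟩
  have hcont : ContinuousOn h (Set.Icc t1 t2) := fun s hs =>
    (hash s (hsub hs)).continuousAt.continuousWithinAt
  have hanti : AntitoneOn h (Set.Icc t1 t2) := by
    apply antitoneOn_of_hasDerivWithinAt_nonpos (convex_Icc t1 t2) hcont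
      (f' := fun x => g (y x) + N1)
    · intro x hx
      rw [interior_Icc] at hx
      exact (hash x (hsub (Set.Ioo_subset_Icc_self hx))).hasDerivWithinAt
    · intro x hx
      rw [interior_Icc] at hx
      have hζx : ζb ≤ y x := le_trans (le_max_right _ _)
        (hgt x ⟨hx.1, hx.2.le⟩).le
      linarith [hζ (y x) hζx]
  have hle : h t2 ≤ h t1 :=
    hanti (Set.left_mem_Icc.2 ht1t2) (Set.right_mem_Icc.2 ht1t2) ht1t2
  have hbb' := hbb t1 t2 h0t1 ht1t2 ht2T
  simp only [hh] at hle
  have : y t2 ≤ M + N0 := by nlinarith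
  linarith
end
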